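/- Let p, q > 0. There exists a constant c′ > 0, depending only on p and q, such that for every 𝔷 = (x,y,z) ∈ ℝ³ with x ≠ 0 and y ≠ 0: d_Sol(o, 𝔷) ≤ c′ + |log|x|/p + log|y|/q| + min{ |log|x|/p| + |log|y|/q + z| , |log|x|/p − z| + |log|y|/q| }. -/

import Mathlib

open Real MeasureTheory

/-- A path `γ` is piecewise `C¹` on `[0,1]` if it is continuous there and there is a
finite partition `0 = t₀ < t₁ < ⋯ < tₙ = 1` such that `γ` is `C¹` on each subinterval. -/
def PiecewiseC1 {E : Type*} [NormedAddCommGroup E] [NormedSpace ℝ E] (γ : ℝ → E) : Prop :=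
  ContinuousOn γ (Set.Icc 0 1) ∧
  ∃ (n : ℕ) (t : ℕ → ℝ), t 0 = 0 ∧ t n = 1 ∧ (∀ i < n, t i < t (i + 1)) ∧
    ∀ i < n, ContDiffOn ℝ 1 γ (Set.Icc (t i) (t (i + 1)))

/-- The `Sol(p,q)`-length of a path in `ℝ³`. -/
noncomputable def solLength (p q : ℝ) (γ : ℝ → ℝ × ℝ × ℝ) : ℝ :=
  ∫ t in (0:ℝ)..1,
    Real.sqrt (Real.exp (-(2*p*(γ t).2.2)) * (deriv (fun s => (γ s).1) t)^2
      + Real.exp (2*q*(γ t).2.2) * (deriv (fun s => (γ s).2.1) t)^2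
      + (deriv (fun s => (γ s).2.2) t)^2)

/-- The `Sol(p,q)` distance: infimum of lengths of piecewise `C¹` paths joining the points. -/
noncomputable def solDist (p q : ℝ) (u v : ℝ × ℝ × ℝ) : ℝ :=
  ⨅ γ : {γ : ℝ → ℝ × ℝ × ℝ // γ 0 = u ∧ γ 1 = v ∧ PiecewiseC1 γ}, solLength p q γ.1

/-! ### Auxiliary machinery: piecewise linear paths on `[0,1]` with 5 segments -/

/-- piecewise linear interpolation through values `v 0, …, v 5` at times `i/5`. -/
noncomputable def pl (v : ℕ → ℝ) (t : ℝ) : ℝ :=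
  if t ≤ 1/5 then v 0 + 5*t*(v 1 - v 0)
  else if t ≤ 2/5 then v 1 + (5*t-1)*(v 2 - v 1)
  else if t ≤ 3/5 then v 2 + (5*t-2)*(v 3 - v 2)
  else if t ≤ 4/5 then v 3 + (5*t-3)*(v 4 - v 3)
  else v 4 + (5*t-4)*(v 5 - v 4)

lemma pl_zero (v : ℕ → ℝ) : pl v 0 = v 0 := by norm_num [pl]

lemma pl_one (v : ℕ → ℝ) : pl v 1 = v 5 := by norm_num [pl]

lemma pl_eqOn (v : ℕ → ℝ) (i : ℕ) (hi : i < 5) :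
    ∀ t : ℝ, (i:ℝ)/5 ≤ t → t ≤ ((i:ℝ)+1)/5 →
      pl v t = v i + (5*t - i)*(v (i+1) - v i) := by
  interval_cases i <;> intro t h1 h2 <;>
    simp only [pl] <;> push_cast at * <;> split_ifs with a b c d <;>
    first
      | ring1
      | (exfalso; linarith)
      | (have ht : t = 1/5 := by linarith
         subst ht; norm_num)
      | (have ht : t = 2/5 := by linarith
         subst ht; norm_num)
      | (have ht : t = 3/5 := by linarith
         subst ht; norm_num)
      | (have ht : t = 4/5 := by linarith
         subst ht; norm_num)

lemma pl_continuous (v : ℕ → ℝ) : Continuous (pl v) := by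
  unfold pl
  apply Continuous.if_le (g := fun _ : ℝ => (1:ℝ)/5) (f := fun t : ℝ => t)
    (by fun_prop) ?_ continuous_id continuous_const
    (by intro x hx; rw [show x = 1/5 from hx]; norm_num)
  apply Continuous.if_le (g := fun _ : ℝ => (2:ℝ)/5) (f := fun t : ℝ => t)
    (by fun_prop) ?_ continuous_id continuous_const
    (by intro x hx; rw [show x = 2/5 from hx]; norm_num; try ring1)
  apply Continuous.if_le (g := fun _ : ℝ => (3:ℝ)/5) (f := fun t : ℝ => t)
    (by fun_prop) ?_ continuous_id continuous_const
    (by intro x hx; rw [show x = 3/5 from hx]; norm_num; try ring1)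
  apply Continuous.if_le (g := fun _ : ℝ => (4:ℝ)/5) (f := fun t : ℝ => t)
    (by fun_prop) (by fun_prop) continuous_id continuous_const
    (by intro x hx; rw [show x = 4/5 from hx]; norm_num; try ring1)

lemma pl_contDiffOn (v : ℕ → ℝ) (i : ℕ) (hi : i < 5) :
    ContDiffOn ℝ 1 (pl v) (Set.Icc ((i:ℝ)/5) (((i:ℝ)+1)/5)) := by
  have hg : ContDiff ℝ 1 (fun t : ℝ => v i + (5*t - i)*(v (i+1) - v i)) := by fun_prop
  exact hg.contDiffOn.congr (fun t ht => pl_eqOn v i hi t ht.1 ht.2)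

lemma pl_deriv (v : ℕ → ℝ) (i : ℕ) (hi : i < 5) {t : ℝ}
    (h1 : (i:ℝ)/5 < t) (h2 : t < ((i:ℝ)+1)/5) :
    deriv (pl v) t = 5*(v (i+1) - v i) := by
  have heq : pl v =ᶠ[nhds t] (fun t : ℝ => v i + (5*t - i)*(v (i+1) - v i)) :=
    Filter.eventuallyEq_of_mem (Ioo_mem_nhds h1 h2)
      (fun s hs => pl_eqOn v i hi s hs.1.le hs.2.le)
  rw [heq.deriv_eq]
  have : HasDerivAt (fun t : ℝ => v i + (5*t - i)*(v (i+1) - v i)) (5*(v (i+1) - v i)) t := by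
    have h := ((((hasDerivAt_id t).const_mul 5).sub_const
      (i:ℝ)).mul_const (v (i+1) - v i)).const_add (v i)
    simpa using h
  exact this.deriv

lemma ae_ne (b : ℝ) : ∀ᵐ t : ℝ, t ≠ b := by
  rw [ae_iff]
  simp only [not_not, Set.setOf_eq_eq_singleton]
  exact measure_singleton b

lemma piece_integrable {F : ℝ → ℝ} {a b c : ℝ} (hab : a < b)
    (h : ∀ t ∈ Set.Ioo a b, F t = c) :
    IntervalIntegrable F volume a b := by
  rw [intervalIntegrable_iff, Set.uIoc_of_le hab.le]
  have hone : IntegrableOn (fun _ : ℝ => c) (Set.Ioc a b) volume :=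
    integrableOn_const measure_Ioc_lt_top.ne
  refine hone.congr ?_
  have h2 : ∀ᵐ t ∂(volume.restrict (Set.Ioc a b)), t ≠ b := ae_restrict_of_ae (ae_ne b)
  have h3 : ∀ᵐ t ∂(volume.restrict (Set.Ioc a b)), t ∈ Set.Ioc a b :=
    ae_restrict_mem measurableSet_Ioc
  filter_upwards [h2, h3] with t htb ht
  exact (h t ⟨ht.1, lt_of_le_of_ne ht.2 htb⟩).symm

lemma piece_integral {F : ℝ → ℝ} {a b c : ℝ} (hab : a < b)
    (h : ∀ t ∈ Set.Ioo a b, F t = c) :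
    ∫ t in a..b, F t = (b - a) * c := by
  have : ∫ t in a..b, F t = ∫ _ in a..b, c := by
    apply intervalIntegral.integral_congr_ae
    filter_upwards [ae_ne b] with t htb ht
    rw [Set.uIoc_of_le hab.le] at ht
    exact h t ⟨ht.1, lt_of_le_of_ne ht.2 htb⟩
  rw [this, intervalIntegral.integral_const, smul_eq_mul]

lemma sqrt_exp_sq (u c : ℝ) : Real.sqrt (Real.exp (2*u) * c^2) = Real.exp u * |c| := by
  have h : Real.exp (2*u) * c^2 = (Real.exp u * c)^2 := by
    rw [two_mul, Real.exp_add]; ring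
  rw [h, Real.sqrt_sq_eq_abs, abs_mul, abs_of_pos (Real.exp_pos u)]

lemma pl_piecewiseC1 (vx vy vz : ℕ → ℝ) :
    PiecewiseC1 (fun t => (pl vx t, pl vy t, pl vz t)) := by
  constructor
  · exact (((pl_continuous vx).prodMk
      (((pl_continuous vy).prodMk (pl_continuous vz))))).continuousOn
  · refine ⟨5, fun i => (i:ℝ)/5, by norm_num, by norm_num, ?_, ?_⟩
    · intro i hi; push_cast
      have : (0:ℝ) < 1 := one_pos
      linarith [(Nat.cast_nonneg i : (0:ℝ) ≤ i)]
    · intro i hi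
      show ContDiffOn ℝ 1 (fun t => (pl vx t, pl vy t, pl vz t))
        (Set.Icc (((i:ℕ):ℝ)/5) (((i+1:ℕ):ℝ)/5))
      rw [show (((i+1:ℕ):ℝ))/5 = ((i:ℝ)+1)/5 by push_cast; ring]
      exact ((pl_contDiffOn vx i hi).prodMk
        ((pl_contDiffOn vy i hi).prodMk (pl_contDiffOn vz i hi)))

lemma solLength_nonneg (p q : ℝ) (γ : ℝ → ℝ × ℝ × ℝ) : 0 ≤ solLength p q γ :=
  intervalIntegral.integral_nonneg (by norm_num) (fun u _ => Real.sqrt_nonneg _)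

lemma solDist_le_length (p q : ℝ) (u w : ℝ × ℝ × ℝ) (γ : ℝ → ℝ × ℝ × ℝ)
    (h0 : γ 0 = u) (h1 : γ 1 = w) (hpc : PiecewiseC1 γ) :
    solDist p q u w ≤ solLength p q γ := by
  have hb : BddBelow (Set.range fun γ' :
      {γ' : ℝ → ℝ × ℝ × ℝ // γ' 0 = u ∧ γ' 1 = w ∧ PiecewiseC1 γ'} => solLength p q γ'.1) := by
    refine ⟨0, ?_⟩
    rintro r ⟨γ', rfl⟩
    exact solLength_nonneg p q γ'.1
  exact ciInf_le hb ⟨γ, h0, h1, hpc⟩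

lemma solLength_pl (p q : ℝ) (vx vy vz : ℕ → ℝ) (c : ℕ → ℝ)
    (hc : ∀ i : ℕ, i < 5 → ∀ t : ℝ, (i:ℝ)/5 < t → t < ((i:ℝ)+1)/5 →
      Real.sqrt (Real.exp (-(2*p*(pl vz t))) * (5*(vx (i+1) - vx i))^2
        + Real.exp (2*q*(pl vz t)) * (5*(vy (i+1) - vy i))^2
        + (5*(vz (i+1) - vz i))^2) = c i) :
    solLength p q (fun t => (pl vx t, pl vy t, pl vz t))
      = (c 0 + c 1 + c 2 + c 3 + c 4)/5 := by
  set F := fun t : ℝ => Real.sqrt (Real.exp (-(2*p*(pl vz t))) * (deriv (pl vx) t)^2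
      + Real.exp (2*q*(pl vz t)) * (deriv (pl vy) t)^2 + (deriv (pl vz) t)^2) with hF
  have hsl : solLength p q (fun t => (pl vx t, pl vy t, pl vz t)) = ∫ t in (0:ℝ)..1, F t := rfl
  have key : ∀ i : ℕ, i < 5 → ∀ t : ℝ, (i:ℝ)/5 < t → t < ((i:ℝ)+1)/5 → F t = c i := by
    intro i hi t h1 h2
    rw [hF]; dsimp only
    rw [pl_deriv vx i hi h1 h2, pl_deriv vy i hi h1 h2, pl_deriv vz i hi h1 h2]
    exact hc i hi t h1 h2
  have k0 : ∀ t ∈ Set.Ioo (0:ℝ) (1/5), F t = c 0 :=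
    fun t ht => key 0 (by norm_num) t (by push_cast; linarith [ht.1]) (by push_cast; linarith [ht.2])
  have k1 : ∀ t ∈ Set.Ioo (1/5:ℝ) (2/5), F t = c 1 :=
    fun t ht => key 1 (by norm_num) t (by push_cast; linarith [ht.1]) (by push_cast; linarith [ht.2])
  have k2 : ∀ t ∈ Set.Ioo (2/5:ℝ) (3/5), F t = c 2 :=
    fun t ht => key 2 (by norm_num) t (by push_cast; linarith [ht.1]) (by push_cast; linarith [ht.2])
  have k3 : ∀ t ∈ Set.Ioo (3/5:ℝ) (4/5), F t = c 3 :=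
    fun t ht => key 3 (by norm_num) t (by push_cast; linarith [ht.1]) (by push_cast; linarith [ht.2])
  have k4 : ∀ t ∈ Set.Ioo (4/5:ℝ) 1, F t = c 4 :=
    fun t ht => key 4 (by norm_num) t (by push_cast; linarith [ht.1]) (by push_cast; linarith [ht.2])
  have I0 := piece_integrable (by norm_num : (0:ℝ) < 1/5) k0
  have I1 := piece_integrable (by norm_num : (1/5:ℝ) < 2/5) k1
  have I2 := piece_integrable (by norm_num : (2/5:ℝ) < 3/5) k2
  have I3 := piece_integrable (by norm_num : (3/5:ℝ) < 4/5) k3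
  have I4 := piece_integrable (by norm_num : (4/5:ℝ) < 1) k4
  have E0 := piece_integral (by norm_num : (0:ℝ) < 1/5) k0
  have E1 := piece_integral (by norm_num : (1/5:ℝ) < 2/5) k1
  have E2 := piece_integral (by norm_num : (2/5:ℝ) < 3/5) k2
  have E3 := piece_integral (by norm_num : (3/5:ℝ) < 4/5) k3
  have E4 := piece_integral (by norm_num : (4/5:ℝ) < 1) k4
  rw [hsl,
    ← intervalIntegral.integral_add_adjacent_intervals (((I0.trans I1).trans I2).trans I3) I4,
    ← intervalIntegral.integral_add_adjacent_intervals ((I0.trans I1).trans I2) I3,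
    ← intervalIntegral.integral_add_adjacent_intervals (I0.trans I1) I2,
    ← intervalIntegral.integral_add_adjacent_intervals I0 I1,
    E0, E1, E2, E3, E4]
  ring

lemma path_bound1 (p q : ℝ) (hp : 0 < p) (hq : 0 < q) (x y z : ℝ) (hx : x ≠ 0) (hy : y ≠ 0) :
    solDist p q (0, 0, 0) (x, y, z)
      ≤ 2 + |Real.log |x| / p + Real.log |y| / q|
        + (|Real.log |x| / p| + |Real.log |y| / q + z|) := by
  set a := Real.log |x| / p with ha
  set b := Real.log |y| / q with hb
  set vx : ℕ → ℝ := fun n => if n ≤ 1 then 0 else x with hvx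
  set vy : ℕ → ℝ := fun n => if n ≤ 3 then 0 else y with hvy
  set vz : ℕ → ℝ := fun n => if n = 0 then 0 else if n ≤ 2 then a else if n ≤ 4 then -b else z
    with hvz
  set c : ℕ → ℝ := fun i => if i = 0 then 5*|a| else if i = 1 then 5 else if i = 2 then 5*|a+b|
    else if i = 3 then 5 else 5*|b+z| with hc
  have hxabs : (0:ℝ) < |x| := abs_pos.mpr hx
  have hyabs : (0:ℝ) < |y| := abs_pos.mpr hy
  have hcc : ∀ i : ℕ, i < 5 → ∀ t : ℝ, (i:ℝ)/5 < t → t < ((i:ℝ)+1)/5 →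
      Real.sqrt (Real.exp (-(2*p*(pl vz t))) * (5*(vx (i+1) - vx i))^2
        + Real.exp (2*q*(pl vz t)) * (5*(vy (i+1) - vy i))^2
        + (5*(vz (i+1) - vz i))^2) = c i := by
    intro i hi t h1 h2
    interval_cases i
    · -- vertical 0 → a
      simp only [hvx, hvy, hvz, hc]
      norm_num
      rw [Real.sqrt_sq_eq_abs, abs_mul]
      norm_num
    · -- horizontal x at height a
      have hzt : pl vz t = a := by
        rw [pl_eqOn vz 1 (by norm_num) t h1.le h2.le]
        simp [hvz]
      rw [hzt]
      simp only [hvx, hvy, hvz, hc]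
      norm_num
      rw [show -(2*p*a) = 2*(-(p*a)) by ring, sqrt_exp_sq]
      rw [show p*a = Real.log |x| by rw [ha]; field_simp]
      rw [Real.exp_neg, Real.exp_log hxabs, abs_mul]
      have : |x| ≠ 0 := ne_of_gt hxabs
      field_simp
      norm_num
    · -- vertical a → -b
      simp only [hvx, hvy, hvz, hc]
      norm_num
      rw [show -b - a = -(a + b) by ring]
      rw [show (5*(-(a+b)))^2 = (5*(a+b))^2 by ring]
      rw [Real.sqrt_sq_eq_abs, abs_mul]
      norm_num
    · -- horizontal y at height -b
      have hzt : pl vz t = -b := by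
        rw [pl_eqOn vz 3 (by norm_num) t h1.le h2.le]
        simp [hvz]
      rw [hzt]
      simp only [hvx, hvy, hvz, hc]
      norm_num
      rw [show -(2*q*b) = 2*(-(q*b)) by ring, sqrt_exp_sq]
      rw [show q*b = Real.log |y| by rw [hb]; field_simp]
      rw [Real.exp_neg, Real.exp_log hyabs, abs_mul]
      have : |y| ≠ 0 := ne_of_gt hyabs
      field_simp
      norm_num
    · -- vertical -b → z
      simp only [hvx, hvy, hvz, hc]
      norm_num
      rw [show 5*(z + b) = 5*(b + z) by ring]
      rw [Real.sqrt_sq_eq_abs, abs_mul]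
      norm_num
  have h0 : (fun t => (pl vx t, pl vy t, pl vz t)) 0 = ((0:ℝ), (0:ℝ), (0:ℝ)) := by
    simp [pl_zero, hvx, hvy, hvz]
  have h1 : (fun t => (pl vx t, pl vy t, pl vz t)) 1 = (x, y, z) := by
    simp [pl_one, hvx, hvy, hvz]
  calc solDist p q (0, 0, 0) (x, y, z)
      ≤ solLength p q (fun t => (pl vx t, pl vy t, pl vz t)) :=
        solDist_le_length p q _ _ _ h0 h1 (pl_piecewiseC1 vx vy vz)
    _ = (c 0 + c 1 + c 2 + c 3 + c 4)/5 := solLength_pl p q vx vy vz c hcc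
    _ = 2 + |a + b| + (|a| + |b + z|) := by
        simp only [hc]
        norm_num
        ring

lemma path_bound2 (p q : ℝ) (hp : 0 < p) (hq : 0 < q) (x y z : ℝ) (hx : x ≠ 0) (hy : y ≠ 0) :
    solDist p q (0, 0, 0) (x, y, z)
      ≤ 2 + |Real.log |x| / p + Real.log |y| / q|
        + (|Real.log |x| / p - z| + |Real.log |y| / q|) := by
  set a := Real.log |x| / p with ha
  set b := Real.log |y| / q with hb
  set vx : ℕ → ℝ := fun n => if n ≤ 3 then 0 else x with hvx
  set vy : ℕ → ℝ := fun n => if n ≤ 1 then 0 else y with hvy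
  set vz : ℕ → ℝ := fun n => if n = 0 then 0 else if n ≤ 2 then -b else if n ≤ 4 then a else z
    with hvz
  set c : ℕ → ℝ := fun i => if i = 0 then 5*|b| else if i = 1 then 5 else if i = 2 then 5*|a+b|
    else if i = 3 then 5 else 5*|a - z| with hc
  have hxabs : (0:ℝ) < |x| := abs_pos.mpr hx
  have hyabs : (0:ℝ) < |y| := abs_pos.mpr hy
  have hcc : ∀ i : ℕ, i < 5 → ∀ t : ℝ, (i:ℝ)/5 < t → t < ((i:ℝ)+1)/5 →
      Real.sqrt (Real.exp (-(2*p*(pl vz t))) * (5*(vx (i+1) - vx i))^2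
        + Real.exp (2*q*(pl vz t)) * (5*(vy (i+1) - vy i))^2
        + (5*(vz (i+1) - vz i))^2) = c i := by
    intro i hi t h1 h2
    interval_cases i
    · -- vertical 0 → -b
      simp only [hvx, hvy, hvz, hc]
      norm_num
      rw [Real.sqrt_sq_eq_abs, abs_mul]
      norm_num
    · -- horizontal y at height -b
      have hzt : pl vz t = -b := by
        rw [pl_eqOn vz 1 (by norm_num) t h1.le h2.le]
        simp [hvz]
      rw [hzt]
      simp only [hvx, hvy, hvz, hc]
      norm_num
      rw [show -(2*q*b) = 2*(-(q*b)) by ring, sqrt_exp_sq]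
      rw [show q*b = Real.log |y| by rw [hb]; field_simp]
      rw [Real.exp_neg, Real.exp_log hyabs, abs_mul]
      have : |y| ≠ 0 := ne_of_gt hyabs
      field_simp
      norm_num
    · -- vertical -b → a
      simp only [hvx, hvy, hvz, hc]
      norm_num
      rw [Real.sqrt_sq_eq_abs, abs_mul]
      norm_num
    · -- horizontal x at height a
      have hzt : pl vz t = a := by
        rw [pl_eqOn vz 3 (by norm_num) t h1.le h2.le]
        simp [hvz]
      rw [hzt]
      simp only [hvx, hvy, hvz, hc]
      norm_num
      rw [show -(2*p*a) = 2*(-(p*a)) by ring, sqrt_exp_sq]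
      rw [show p*a = Real.log |x| by rw [ha]; field_simp]
      rw [Real.exp_neg, Real.exp_log hxabs, abs_mul]
      have : |x| ≠ 0 := ne_of_gt hxabs
      field_simp
      norm_num
    · -- vertical a → z
      simp only [hvx, hvy, hvz, hc]
      norm_num
      rw [show (5*(z - a))^2 = (5*(a - z))^2 by ring]
      rw [Real.sqrt_sq_eq_abs, abs_mul]
      norm_num
  have h0 : (fun t => (pl vx t, pl vy t, pl vz t)) 0 = ((0:ℝ), (0:ℝ), (0:ℝ)) := by
    simp [pl_zero, hvx, hvy, hvz]
  have h1 : (fun t => (pl vx t, pl vy t, pl vz t)) 1 = (x, y, z) := by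
    simp [pl_one, hvx, hvy, hvz]
  calc solDist p q (0, 0, 0) (x, y, z)
      ≤ solLength p q (fun t => (pl vx t, pl vy t, pl vz t)) :=
        solDist_le_length p q _ _ _ h0 h1 (pl_piecewiseC1 vx vy vz)
    _ = (c 0 + c 1 + c 2 + c 3 + c 4)/5 := solLength_pl p q vx vy vz c hcc
    _ = 2 + |a + b| + (|a - z| + |b|) := by
        simp only [hc]
        norm_num
        ring

theorem solDist_upper_bound_log (p q : ℝ) (hp : 0 < p) (hq : 0 < q) :
    ∃ c' > (0:ℝ), ∀ x y z : ℝ, x ≠ 0 → y ≠ 0 →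
      solDist p q (0, 0, 0) (x, y, z)
        ≤ c' + |Real.log |x| / p + Real.log |y| / q|
          + min (|Real.log |x| / p| + |Real.log |y| / q + z|)
                (|Real.log |x| / p - z| + |Real.log |y| / q|) := by
  refine ⟨2, by norm_num, ?_⟩
  intro x y z hx hy
  rcases min_cases (|Real.log |x| / p| + |Real.log |y| / q + z|)
      (|Real.log |x| / p - z| + |Real.log |y| / q|) with ⟨hm, _⟩ | ⟨hm, _⟩ <;> rw [hm]
  · exact path_bound1 p q hp hq x y z hx hy
  · exact path_bound2 p q hp hq x y z hx hy
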